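/- If a distance-optimal solution to an MPP instance exists at all, then one exists with makespan at most n·T_t, where T_t is the minimum makespan of the instance; i.e., the minimum total distance over all feasible solutions is attained by a solution whose makespan is at most n times the optimal makespan. -/

import Mathlib

/-- Feasibility of a path set for an MPP instance `(G, R, x_I, x_G)`. -/
def Feasible {V : Type*} (G : SimpleGraph V) {n : ℕ} (xI xG : Fin n → V)
    (p : Fin n → ℕ → V) (k : Fin n → ℕ) : Prop :=
  (∀ i, p i 0 = xI i) ∧
  (∀ i t, k i ≤ t → p i t = xG i) ∧
  (∀ i t, (∀ s, t ≤ s → p i s = xG i) → k i ≤ t) ∧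
  (∀ i t, p i t = p i (t + 1) ∨ G.Adj (p i t) (p i (t + 1))) ∧
  (∀ i j, i ≠ j → ∀ t, p i t ≠ p j t) ∧
  (∀ i j, i ≠ j → ∀ t, ¬(p i t = p j (t + 1) ∧ p i (t + 1) = p j t))

/-- The makespan `T_P = max_i k_i^min`. -/
def makespan {n : ℕ} (k : Fin n → ℕ) : ℕ := Finset.univ.sup k

open scoped Classical in
/-- Total distance traveled by the robots (number of edge traversals). -/
noncomputable def totalDist {V : Type*} {n : ℕ} (p : Fin n → ℕ → V) (k : Fin n → ℕ) : ℕ :=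
  ∑ i, ((Finset.range (k i)).filter fun t => p i t ≠ p i (t + 1)).card

open scoped Classical in
lemma countA {V : Type*} {n : ℕ} (xG : Fin n → V) (p : Fin n → ℕ → V) (k : Fin n → ℕ)
    (h2 : ∀ i t, k i ≤ t → p i t = xG i)
    (hmove : ∀ t < makespan k, ∃ i, p i t ≠ p i (t + 1)) : makespan k ≤ totalDist p k := by
  have hsub : Finset.range (makespan k) ⊆
      Finset.univ.biUnion (fun i => (Finset.range (k i)).filter fun t => p i t ≠ p i (t + 1)) := by
    intro t ht
    simp only [Finset.mem_range] at ht
    obtain ⟨i, hi⟩ := hmove t ht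
    have htk : t < k i := by
      by_contra h
      push_neg at h
      exact hi ((h2 i t h).trans (h2 i (t + 1) (by omega)).symm)
    exact Finset.mem_biUnion.2 ⟨i, Finset.mem_univ _,
      Finset.mem_filter.2 ⟨Finset.mem_range.2 htk, hi⟩⟩
  calc makespan k = (Finset.range (makespan k)).card := (Finset.card_range _).symm
    _ ≤ _ := Finset.card_le_card hsub
    _ ≤ ∑ i, ((Finset.range (k i)).filter fun t => p i t ≠ p i (t + 1)).card :=
        Finset.card_biUnion_le
    _ = totalDist p k := rfl

open scoped Classical in
lemma delete {V : Type*} (G : SimpleGraph V) {n : ℕ} (xI xG : Fin n → V)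
    (p : Fin n → ℕ → V) (k : Fin n → ℕ) (hF : Feasible G xI xG p k)
    (t₀ : ℕ) (ht : t₀ < makespan k) (hstat : ∀ i, p i t₀ = p i (t₀ + 1)) :
    ∃ p' k', Feasible G xI xG p' k' ∧ totalDist p' k' = totalDist p k ∧
      makespan k' < makespan k := by
  obtain ⟨h1, h2, h3, h4, h5, h6⟩ := hF
  set sig : ℕ → ℕ := fun s => if s < t₀ then s else s + 1 with hsig
  have hsucc : ∀ i s, p i (sig (s + 1)) = p i (sig s + 1) := by
    intro i s
    rcases lt_trichotomy (s + 1) t₀ with h | h | h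
    · simp [hsig, h, Nat.lt_of_succ_lt h]
    · have hs : s < t₀ := by omega
      simp only [hsig, if_neg (by omega : ¬ s + 1 < t₀), if_pos hs]
      rw [h, ← hstat i]
    · simp [hsig, if_neg (by omega : ¬ s + 1 < t₀), if_neg (by omega : ¬ s < t₀)]
  refine ⟨fun i s => p i (sig s), fun i => if k i ≤ t₀ then k i else k i - 1, ?_, ?_, ?_⟩
  · -- Feasibility
    refine ⟨?_, ?_, ?_, ?_, ?_, ?_⟩
    · intro i
      by_cases h : 0 < t₀
      · simp [hsig, h, h1]
      · have ht0 : t₀ = 0 := by omega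
        simp only [hsig, if_neg (by omega : ¬ (0:ℕ) < t₀)]
        rw [← ht0, ← hstat i, ht0, h1]
    · intro i t htk
      by_cases h : k i ≤ t₀
      · simp only [if_pos h] at htk
        exact h2 i (sig t) (le_trans htk (by simp only [hsig]; split <;> omega))
      · simp only [if_neg h] at htk
        push_neg at h
        apply h2 i (sig t)
        simp only [hsig]; split <;> omega
    · intro i t hall
      have claim1 : ∀ s, t + 1 ≤ s → p i s = xG i := by
        intro s hs
        rcases lt_trichotomy s t₀ with h | h | h
        · have := hall s (by omega)
          simpa [hsig, h] using this
        · have := hall s (by omega)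
          simp only [hsig, h, if_neg (lt_irrefl t₀)] at this
          rw [h, hstat i, this]
        · have := hall (s - 1) (by omega)
          simp only [hsig, if_neg (by omega : ¬ s - 1 < t₀)] at this
          rwa [(by omega : s - 1 + 1 = s)] at this
      by_cases h : k i ≤ t₀
      · simp only [if_pos h]
        by_cases htt : t < t₀
        · apply h3 i t
          intro s hs
          rcases eq_or_lt_of_le hs with h' | h'
          · have := hall t le_rfl
            simpa [hsig, htt, ← h'] using this
          · exact claim1 s h'
        · omega
      · simp only [if_neg h]
        have := h3 i (t + 1) claim1
        omega
    · intro i s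
      show p i (sig s) = p i (sig (s + 1)) ∨ G.Adj (p i (sig s)) (p i (sig (s + 1)))
      rw [hsucc i s]
      exact h4 i (sig s)
    · intro i j hij s
      exact h5 i j hij (sig s)
    · intro i j hij s
      show ¬(p i (sig s) = p j (sig (s + 1)) ∧ p i (sig (s + 1)) = p j (sig s))
      rw [hsucc i s, hsucc j s]
      exact h6 i j hij (sig s)
  · -- totalDist equality
    unfold totalDist
    refine Finset.sum_congr rfl fun i _ => ?_
    dsimp only
    have hpred : ∀ s, (p i (sig s) ≠ p i (sig (s + 1))) ↔ (p i (sig s) ≠ p i (sig s + 1)) := by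
      intro s; rw [hsucc i s]
    by_cases h : k i ≤ t₀
    · rw [if_pos h]
      congr 1
      apply Finset.filter_congr
      intro s hs
      simp only [Finset.mem_range] at hs
      have hst : s < t₀ := lt_of_lt_of_le hs h
      rw [hpred s]
      simp [hsig, hst, Nat.lt_of_succ_le (le_trans hs h)]
    · rw [if_neg h]
      push_neg at h
      refine Finset.card_nbij' sig (fun b => if b < t₀ then b else b - 1) ?_ ?_ ?_ ?_
      · intro a ha
        simp only [Finset.mem_coe, Finset.mem_filter, Finset.mem_range] at ha ⊢
        obtain ⟨har, hap⟩ := ha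
        rw [hpred a] at hap
        refine ⟨by simp only [hsig]; split <;> omega, hap⟩
      · intro b hb
        simp only [Finset.mem_coe, Finset.mem_filter, Finset.mem_range] at hb ⊢
        obtain ⟨hbr, hbp⟩ := hb
        have hbne : b ≠ t₀ := by
          intro hc; rw [hc] at hbp; exact hbp (hstat i)
        by_cases hbt : b < t₀
        · rw [if_pos hbt]
          refine ⟨by omega, ?_⟩
          rw [hpred b]
          have : sig b = b := by simp [hsig, hbt]
          rw [this]; exact hbp
        · rw [if_neg hbt]
          refine ⟨by omega, ?_⟩
          rw [hpred (b - 1)]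
          have : sig (b - 1) = b := by simp only [hsig]; rw [if_neg (by omega)]; omega
          rw [this]; exact hbp
      · intro a ha
        simp only [Finset.mem_coe, Finset.mem_filter, Finset.mem_range] at ha
        by_cases hat : a < t₀
        · simp [hsig, hat]
        · simp only [hsig, if_neg hat]
          rw [if_neg (by omega)]
          omega
      · intro b hb
        simp only [Finset.mem_coe, Finset.mem_filter, Finset.mem_range] at hb
        have hbne : b ≠ t₀ := by
          intro hc; rw [hc] at hb; exact hb.2 (hstat i)
        by_cases hbt : b < t₀
        · show sig (if b < t₀ then b else b - 1) = b
          simp [hsig, hbt]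
        · show sig (if b < t₀ then b else b - 1) = b
          rw [if_neg hbt]
          simp only [hsig]; rw [if_neg (by omega)]; omega
  · -- makespan decrease
    have hM : ∀ i, k i ≤ makespan k := fun i => Finset.le_sup (Finset.mem_univ i)
    have hsup : makespan (fun i => if k i ≤ t₀ then k i else k i - 1) ≤ makespan k - 1 := by
      apply Finset.sup_le
      intro i _
      have := hM i
      show (if k i ≤ t₀ then k i else k i - 1) ≤ makespan k - 1
      split <;> omega
    omega


lemma compress {V : Type*} (G : SimpleGraph V) {n : ℕ} (xI xG : Fin n → V) :
    ∀ T (p : Fin n → ℕ → V) (k : Fin n → ℕ), Feasible G xI xG p k → makespan k = T →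
      ∃ p' k', Feasible G xI xG p' k' ∧ totalDist p' k' = totalDist p k ∧
        makespan k' ≤ totalDist p k := by
  intro T
  induction T using Nat.strong_induction_on with
  | _ T IH =>
    intro p k hF hT
    by_cases h : makespan k ≤ totalDist p k
    · exact ⟨p, k, hF, rfl, h⟩
    · have hex : ∃ t₀, t₀ < makespan k ∧ ∀ i, p i t₀ = p i (t₀ + 1) := by
        by_contra hc
        push_neg at hc
        exact h (countA xG p k hF.2.1 hc)
      obtain ⟨t₀, ht₀, hstat⟩ := hex
      obtain ⟨p', k', hF', hd, hm⟩ := delete G xI xG p k hF t₀ ht₀ hstat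
      obtain ⟨p'', k'', hF'', hd'', hm''⟩ := IH (makespan k') (by omega) p' k' hF' rfl
      exact ⟨p'', k'', hF'', by rw [hd'', hd], by rw [hd] at hm''; exact hm''⟩

/-- If `T_t` is the minimum makespan of a (solvable) MPP instance, then the minimum total
distance over all feasible solutions is attained by a feasible solution whose makespan is at
most `n · T_t`. -/
theorem stmt16 {V : Type*} [Fintype V] (G : SimpleGraph V) {n : ℕ} (xI xG : Fin n → V)
    (hI : Function.Injective xI) (hGoal : Function.Injective xG) (Tt : ℕ)
    (hTt : IsLeast {T | ∃ p k, Feasible G xI xG p k ∧ makespan k = T} Tt) :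
    ∃ p k, Feasible G xI xG p k ∧ makespan k ≤ n * Tt ∧
      ∀ q m, Feasible G xI xG q m → totalDist p k ≤ totalDist q m := by
  classical
  obtain ⟨⟨p₀, k₀, hF₀, hmk₀⟩, _⟩ := hTt
  set S : Set ℕ := {d | ∃ q m, Feasible G xI xG q m ∧ totalDist q m = d} with hS
  have hne : S.Nonempty := ⟨totalDist p₀ k₀, p₀, k₀, hF₀, rfl⟩
  obtain ⟨q, m, hFq, hdq⟩ := Nat.sInf_mem hne
  obtain ⟨p, k, hFp, hdp, hmp⟩ := compress G xI xG (makespan m) q m hFq rfl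
  have hbound : totalDist p₀ k₀ ≤ n * Tt := by
    have hcard : ∀ i : Fin n,
        ((Finset.range (k₀ i)).filter fun t => p₀ i t ≠ p₀ i (t + 1)).card ≤ Tt := by
      intro i
      calc ((Finset.range (k₀ i)).filter fun t => p₀ i t ≠ p₀ i (t + 1)).card
          ≤ (Finset.range (k₀ i)).card := Finset.card_filter_le _ _
        _ = k₀ i := Finset.card_range _
        _ ≤ makespan k₀ := Finset.le_sup (Finset.mem_univ i)
        _ = Tt := hmk₀
    calc totalDist p₀ k₀
        ≤ ∑ _i : Fin n, Tt := Finset.sum_le_sum fun i _ => hcard i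
      _ = n * Tt := by simp [Finset.sum_const, mul_comm]
  have hDle : sInf S ≤ totalDist p₀ k₀ := Nat.sInf_le ⟨p₀, k₀, hF₀, rfl⟩
  refine ⟨p, k, hFp, ?_, ?_⟩
  · rw [hdq] at hmp
    omega
  · intro q' m' hF'
    rw [hdp, hdq]
    exact Nat.sInf_le ⟨q', m', hF', rfl⟩
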